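/- Let M be a graph with girth greater than k and let G be its line graph. If T is a set of at most k edges of M that induces a 2-connected subgraph of G and is not contained in any single star Star(v), then T contains two vertex-disjoint edges of M. -/

import Mathlib

/-- A graph is 2-vertex-connected: it has at least 3 vertices and removing any
single vertex leaves it connected. -/
def TwoConnected {V : Type*} (G : SimpleGraph V) : Prop :=
  3 ≤ Nat.card V ∧ ∀ v : V, (G.induce ({v}ᶜ : Set V)).Connected

/-- The line graph of `M`: vertices are the edges of `M`, two distinct edges
are adjacent iff they share an endpoint. -/
def lineGraph {V : Type*} (M : SimpleGraph V) : SimpleGraph M.edgeSet where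
  Adj e f := e ≠ f ∧ ∃ v : V, v ∈ (e : Sym2 V) ∧ v ∈ (f : Sym2 V)
  symm := ⟨fun e f ⟨h, v, h1, h2⟩ => ⟨h.symm, v, h2, h1⟩⟩
  loopless := ⟨fun e h => h.1 rfl⟩

lemma girth_le_three_of_triangle {V : Type*} {M : SimpleGraph V} {a b c : V}
    (hab : M.Adj a b) (hbc : M.Adj b c) (hac : M.Adj a c) : M.girth ≤ 3 := by
  have hne1 : a ≠ b := hab.ne
  have hne2 : b ≠ c := hbc.ne
  have hne3 : a ≠ c := hac.ne
  let w : M.Walk a a :=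
    SimpleGraph.Walk.cons hab (SimpleGraph.Walk.cons hbc (SimpleGraph.Walk.cons hac.symm
      SimpleGraph.Walk.nil))
  have hcyc : w.IsCycle := by
    rw [SimpleGraph.Walk.cons_isCycle_iff]
    constructor
    · rw [SimpleGraph.Walk.isPath_def]
      simp [hne1, hne2, hne3, hne1.symm, hne2.symm, hne3.symm]
    · simp [Sym2.eq_iff, hne2, hne2.symm, hne3, fun h : a = b => hne1 h]
  have h1 : M.egirth ≤ 3 := by
    have := (SimpleGraph.le_egirth (G := M) (n := M.egirth)).mp le_rfl a w hcyc
    simpa [w] using this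
  have : M.egirth.toNat ≤ (3 : ℕ∞).toNat := ENat.toNat_le_toNat h1 (by simp)
  simpa [SimpleGraph.girth] using this

theorem stmt_4 {V : Type*} (k : ℕ) (M : SimpleGraph V)
    (hgirth : (k : ℕ∞) < M.girth)
    (T : Set M.edgeSet) (hT : T.ncard ≤ k)
    (h2conn : TwoConnected ((lineGraph M).induce T))
    (hstar : ¬ ∃ v : V, ∀ e ∈ T, v ∈ (e : Sym2 V)) :
    ∃ e f : M.edgeSet, e ∈ T ∧ f ∈ T ∧
      ∀ v : V, v ∈ (e : Sym2 V) → v ∉ (f : Sym2 V) := by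
  by_contra hcon
  push_neg at hcon
  -- every two members of T share a vertex
  have hmeet : ∀ e ∈ T, ∀ f ∈ T, ∃ v : V, v ∈ (e : Sym2 V) ∧ v ∈ (f : Sym2 V) := by
    intro e he f hf
    obtain ⟨v, hv1, hv2⟩ := hcon e f he hf
    exact ⟨v, hv1, hv2⟩
  -- T has at least 3 elements, so k ≥ 3
  have hcard : 3 ≤ T.ncard := by
    have := h2conn.1
    rwa [Nat.card_coe_set_eq] at this
  have hk : 3 ≤ k := le_trans hcard hT
  have hfin : T.Finite := by
    by_contra h
    rw [Set.Infinite.ncard h] at hcard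
    omega
  -- two distinct elements of T
  obtain ⟨e, he, f, hf, hef⟩ := (Set.one_lt_ncard hfin).mp (by omega)
  -- name the endpoints of e
  obtain ⟨a, b, hab⟩ : ∃ a b, (e : Sym2 V) = s(a, b) := Sym2.ind (fun x y => ⟨x, y, rfl⟩) (e : Sym2 V)
  have hadj_ab : M.Adj a b := M.mem_edgeSet.mp (hab ▸ e.2)
  have hne_ab : a ≠ b := hadj_ab.ne
  -- key step: given e = s(a,b) with b shared with some other edge f, contradiction
  have key : ∀ a b : V, (e : Sym2 V) = s(a, b) → M.Adj a b →
      ∀ f, f ∈ T → f ≠ e → b ∈ (f : Sym2 V) → False := by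
    intro a b hab hadj f hf hfe hbf
    obtain ⟨c, hcf, hcb⟩ : ∃ c, c ∈ (f : Sym2 V) ∧ c ≠ b := by
      obtain ⟨x, y, hxy⟩ : ∃ x y, (f : Sym2 V) = s(x, y) := Sym2.ind (fun x y => ⟨x, y, rfl⟩) (f : Sym2 V)
      have hxyne : x ≠ y := (M.mem_edgeSet.mp (hxy ▸ f.2)).ne
      rcases eq_or_ne x b with h | h
      · exact ⟨y, by simp [hxy], by rw [← h]; exact hxyne.symm⟩
      · exact ⟨x, by simp [hxy], h⟩
    have hfc : (f : Sym2 V) = s(b, c) := by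
      have := (Sym2.mem_and_mem_iff (hcb.symm : b ≠ c)).mp ⟨hbf, hcf⟩
      exact this
    have hca : c ≠ a := by
      intro h
      apply hfe
      apply Subtype.ext
      rw [hfc, hab, h, Sym2.eq_swap]
    have hadj_bc : M.Adj b c := M.mem_edgeSet.mp (hfc ▸ f.2)
    -- since T is not a star at b, there is g ∈ T with b ∉ g
    obtain ⟨g, hg, hbg⟩ : ∃ g ∈ T, b ∉ (g : Sym2 V) := by
      by_contra h
      push_neg at h
      exact hstar ⟨b, h⟩
    -- g meets e in a, g meets f in c
    obtain ⟨v, hve, hvg⟩ := hmeet e he g hg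
    have hva : v = a := by
      rw [hab, Sym2.mem_iff] at hve
      rcases hve with h | h
      · exact h
      · exact absurd (h ▸ hvg) hbg
    obtain ⟨w, hwf, hwg⟩ := hmeet f hf g hg
    have hwc : w = c := by
      rw [hfc, Sym2.mem_iff] at hwf
      rcases hwf with h | h
      · exact absurd (h ▸ hwg) hbg
      · exact h
    have hadj_ac : M.Adj a c := by
      have := (Sym2.mem_and_mem_iff (hca.symm : a ≠ c)).mp ⟨hva ▸ hvg, hwc ▸ hwg⟩
      exact M.mem_edgeSet.mp (this ▸ g.2)
    have h3 := girth_le_three_of_triangle hadj hadj_bc hadj_ac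
    have hkg : (k : ℕ∞) < (M.girth : ℕ∞) := hgirth
    rw [Nat.cast_lt] at hkg
    omega
  -- f shares a vertex with e; it's either a or b
  obtain ⟨v, hve, hvf⟩ := hmeet e he f hf
  rw [hab, Sym2.mem_iff] at hve
  rcases hve with h | h
  · exact key b a (by rw [hab, Sym2.eq_swap]) hadj_ab.symm f hf hef.symm (h ▸ hvf)
  · exact key a b hab hadj_ab f hf hef.symm (h ▸ hvf)
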